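/- Let l1, l2, l3 > 0 with l1 + l2 + l3 = 1 and 0 < τ < min(l1,l2,l3), and let F = F_τ^{l1,l2,l3}. Then F²(x) = x for every x in K1 = (τ, l1), K2 = (l1+τ, l1+l2) and K3 = (l1+l2+τ, 1); F maps (0, τ) onto (l1, l1+τ), maps (l1, l1+τ) onto (l1+l2, l1+l2+τ), and maps (l1+l2, l1+l2+τ) onto (0, τ) (mod 1); F⁶ restricted to each of these three intervals is the identity, while F³ is not the identity on any nonempty open subinterval of them. Consequently the set of interval periods of F equals {2, 6}. -/
import Mathlib


open Set

noncomputable section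

local instance : Fact ((0:ℝ) < 1) := ⟨one_pos⟩

/-- Representative in `[0,1)` of a point of the circle `ℝ/ℤ`. -/
def rep (x : AddCircle (1:ℝ)) : ℝ := (AddCircle.equivIco 1 0 x : ℝ)

/-- Projection `ℝ → ℝ/ℤ`. -/
def toCirc (t : ℝ) : AddCircle (1:ℝ) := (t : AddCircle (1:ℝ))

/-- The fully flipped 3-interval exchange transformation `F_τ^{l1,l2,l3}`
(it depends only on `l1`, `l2`, `τ`, since `l3 = 1 - l1 - l2`). -/
def FF (l1 l2 τ : ℝ) (x : AddCircle (1:ℝ)) : AddCircle (1:ℝ) :=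
  if rep x < l1 then toCirc (l1 - rep x + τ)
  else if rep x < l1 + l2 then toCirc (2*l1 + l2 - rep x + τ)
  else toCirc (l1 + l2 + 1 - rep x + τ)

/-- A nonempty open arc of the circle `ℝ/ℤ`. -/
def IsOpenArc (I : Set (AddCircle (1:ℝ))) : Prop :=
  ∃ a b : ℝ, a < b ∧ b ≤ a + 1 ∧ I = toCirc '' Ioo a b

/-- `k` is an interval period of `G`. -/
def IsIntervalPeriod (G : AddCircle (1:ℝ) → AddCircle (1:ℝ)) (k : ℕ) : Prop :=
  0 < k ∧ ∃ I : Set (AddCircle (1:ℝ)), IsOpenArc I ∧ (∀ x ∈ I, G^[k] x = x) ∧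
    ∀ j, 0 < j → j < k → ¬ (∀ x ∈ I, G^[j] x = x)


lemma toCirc_rep (x : AddCircle (1:ℝ)) : toCirc (rep x) = x :=
  (AddCircle.equivIco 1 0).symm_apply_apply x

lemma rep_mem (x : AddCircle (1:ℝ)) : 0 ≤ rep x ∧ rep x < 1 := by
  have h := (AddCircle.equivIco 1 0 x).2
  simpa [rep] using h

lemma rep_toCirc {t : ℝ} (h0 : 0 ≤ t) (h1 : t < 1) : rep (toCirc t) = t := by
  have h := AddCircle.coe_equivIco_mk_apply (1:ℝ) t
  rw [div_one, mul_one] at h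
  rw [rep, toCirc]
  rw [show ((t:ℝ) : AddCircle (1:ℝ)) = QuotientAddGroup.mk t from rfl, h,
    Int.fract_eq_self.2 ⟨h0, h1⟩]

lemma toCirc_wrap (t : ℝ) : toCirc (t + 1) = toCirc t := AddCircle.coe_add_period 1 t

lemma toCirc_add_int (t : ℝ) (n : ℤ) : toCirc (t + n) = toCirc t := by
  show QuotientAddGroup.mk (t + n) = QuotientAddGroup.mk t
  rw [QuotientAddGroup.eq]
  refine ⟨-n, ?_⟩
  show (-n : ℤ) • (1:ℝ) = -(t + n) + t
  rw [zsmul_eq_mul]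
  push_cast
  ring

lemma toCirc_inj {s t : ℝ} (hs0 : 0 ≤ s) (hs1 : s < 1) (ht0 : 0 ≤ t) (ht1 : t < 1)
    (h : toCirc s = toCirc t) : s = t := by
  have := rep_toCirc hs0 hs1
  rw [h, rep_toCirc ht0 ht1] at this
  exact this.symm

/-- context of hypotheses -/
def Ctx (l1 l2 τ : ℝ) : Prop :=
  0 < l1 ∧ 0 < l2 ∧ 0 < τ ∧ τ < l1 ∧ τ < l2 ∧ l1 + l2 + τ < 1

lemma hA {l1 l2 τ : ℝ} (hc : Ctx l1 l2 τ) {t : ℝ} (h0 : 0 ≤ t) (h1 : t < l1) :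
    FF l1 l2 τ (toCirc t) = toCirc (l1 + τ - t) := by
  obtain ⟨c1, c2, c3, c4, c5, c6⟩ := id hc
  rw [FF, rep_toCirc h0 (by linarith), if_pos h1]
  exact congrArg toCirc (by ring)

lemma hB {l1 l2 τ : ℝ} (hc : Ctx l1 l2 τ) {t : ℝ} (h0 : l1 ≤ t) (h1 : t < l1 + l2) :
    FF l1 l2 τ (toCirc t) = toCirc (2*l1 + l2 + τ - t) := by
  obtain ⟨c1, c2, c3, c4, c5, c6⟩ := id hc
  rw [FF, rep_toCirc (by linarith) (by linarith), if_neg (not_lt.2 h0), if_pos h1]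
  exact congrArg toCirc (by ring)

lemma hC1 {l1 l2 τ : ℝ} (hc : Ctx l1 l2 τ) {t : ℝ} (h0 : l1 + l2 ≤ t) (h1 : t ≤ l1 + l2 + τ) :
    FF l1 l2 τ (toCirc t) = toCirc (l1 + l2 + τ - t) := by
  obtain ⟨c1, c2, c3, c4, c5, c6⟩ := id hc
  rw [FF, rep_toCirc (by linarith) (by linarith), if_neg (not_lt.2 (by linarith)),
    if_neg (not_lt.2 h0)]
  rw [show l1 + l2 + 1 - t + τ = (l1 + l2 + τ - t) + 1 by ring, toCirc_wrap]

lemma hC2 {l1 l2 τ : ℝ} (hc : Ctx l1 l2 τ) {t : ℝ} (h0 : l1 + l2 + τ ≤ t) (h1 : t < 1) :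
    FF l1 l2 τ (toCirc t) = toCirc (l1 + l2 + 1 + τ - t) := by
  obtain ⟨c1, c2, c3, c4, c5, c6⟩ := id hc
  rw [FF, rep_toCirc (by linarith) (by linarith), if_neg (not_lt.2 (by linarith)),
    if_neg (not_lt.2 (by linarith))]
  exact congrArg toCirc (by ring)

lemma hK1 {l1 l2 τ : ℝ} (hc : Ctx l1 l2 τ) {t : ℝ} (h0 : τ < t) (h1 : t < l1) :
    FF l1 l2 τ (FF l1 l2 τ (toCirc t)) = toCirc t := by
  obtain ⟨c1, c2, c3, c4, c5, c6⟩ := id hc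
  rw [hA hc (by linarith) h1, hA (t := l1 + τ - t) hc (by linarith) (by linarith)]
  exact congrArg toCirc (by ring)

lemma hK2 {l1 l2 τ : ℝ} (hc : Ctx l1 l2 τ) {t : ℝ} (h0 : l1 + τ < t) (h1 : t < l1 + l2) :
    FF l1 l2 τ (FF l1 l2 τ (toCirc t)) = toCirc t := by
  obtain ⟨c1, c2, c3, c4, c5, c6⟩ := id hc
  rw [hB hc (by linarith) h1, hB (t := 2*l1 + l2 + τ - t) hc (by linarith) (by linarith)]
  exact congrArg toCirc (by ring)

lemma hK3 {l1 l2 τ : ℝ} (hc : Ctx l1 l2 τ) {t : ℝ} (h0 : l1 + l2 + τ < t) (h1 : t < 1) :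
    FF l1 l2 τ (FF l1 l2 τ (toCirc t)) = toCirc t := by
  obtain ⟨c1, c2, c3, c4, c5, c6⟩ := id hc
  rw [hC2 hc (by linarith) h1, hC2 (t := l1 + l2 + 1 + τ - t) hc (by linarith) (by linarith)]
  exact congrArg toCirc (by ring)

lemma hJ1 {l1 l2 τ : ℝ} (hc : Ctx l1 l2 τ) {t : ℝ} (h0 : 0 ≤ t) (h1 : t ≤ τ) :
    FF l1 l2 τ (FF l1 l2 τ (FF l1 l2 τ (toCirc t))) = toCirc (τ - t) := by
  obtain ⟨c1, c2, c3, c4, c5, c6⟩ := id hc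
  rw [hA hc h0 (by linarith), hB (t := l1 + τ - t) hc (by linarith) (by linarith),
    hC1 (t := 2*l1 + l2 + τ - (l1 + τ - t)) hc (by linarith) (by linarith)]
  exact congrArg toCirc (by ring)

lemma hJ2 {l1 l2 τ : ℝ} (hc : Ctx l1 l2 τ) {t : ℝ} (h0 : l1 ≤ t) (h1 : t ≤ l1 + τ) :
    FF l1 l2 τ (FF l1 l2 τ (FF l1 l2 τ (toCirc t))) = toCirc (2*l1 + τ - t) := by
  obtain ⟨c1, c2, c3, c4, c5, c6⟩ := id hc
  rw [hB hc h0 (by linarith), hC1 (t := 2*l1 + l2 + τ - t) hc (by linarith) (by linarith),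
    hA (t := l1 + l2 + τ - (2*l1 + l2 + τ - t)) hc (by linarith) (by linarith)]
  exact congrArg toCirc (by ring)

lemma hJ3 {l1 l2 τ : ℝ} (hc : Ctx l1 l2 τ) {t : ℝ} (h0 : l1 + l2 ≤ t) (h1 : t ≤ l1 + l2 + τ) :
    FF l1 l2 τ (FF l1 l2 τ (FF l1 l2 τ (toCirc t))) = toCirc (2*l1 + 2*l2 + τ - t) := by
  obtain ⟨c1, c2, c3, c4, c5, c6⟩ := id hc
  rw [hC1 hc h0 h1, hA (t := l1 + l2 + τ - t) hc (by linarith) (by linarith),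
    hB (t := l1 + τ - (l1 + l2 + τ - t)) hc (by linarith) (by linarith)]
  exact congrArg toCirc (by ring)

lemma iter6 {α : Type*} (f : α → α) (x : α) : f^[6] x = f (f (f (f (f (f x))))) := rfl
lemma iter3 {α : Type*} (f : α → α) (x : α) : f^[3] x = f (f (f x)) := rfl
lemma iter2 {α : Type*} (f : α → α) (x : α) : f^[2] x = f (f x) := rfl
lemma iter4 {α : Type*} (f : α → α) (x : α) : f^[4] x = f (f (f (f x))) := rfl
lemma iter5 {α : Type*} (f : α → α) (x : α) : f^[5] x = f (f (f (f (f x)))) := rfl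

lemma h6 {l1 l2 τ : ℝ} (hc : Ctx l1 l2 τ) {t : ℝ} (h0 : 0 ≤ t) (h1 : t < 1) :
    (FF l1 l2 τ)^[6] (toCirc t) = toCirc t := by
  obtain ⟨c1, c2, c3, c4, c5, c6⟩ := id hc
  rw [iter6]
  rcases le_or_gt t τ with h | h
  · rw [hJ1 ⟨c1,c2,c3,c4,c5,c6⟩ h0 h, hJ1 (t := τ - t) ⟨c1,c2,c3,c4,c5,c6⟩ (by linarith) (by linarith)]
    exact congrArg toCirc (by ring)
  rcases lt_or_ge t l1 with h' | h'
  · rw [hK1 ⟨c1,c2,c3,c4,c5,c6⟩ h h', hK1 ⟨c1,c2,c3,c4,c5,c6⟩ h h', hK1 ⟨c1,c2,c3,c4,c5,c6⟩ h h']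
  rcases le_or_gt t (l1 + τ) with h'' | h''
  · rw [hJ2 ⟨c1,c2,c3,c4,c5,c6⟩ h' h'',
      hJ2 (t := 2*l1 + τ - t) ⟨c1,c2,c3,c4,c5,c6⟩ (by linarith) (by linarith)]
    exact congrArg toCirc (by ring)
  rcases lt_or_ge t (l1 + l2) with h3 | h3
  · rw [hK2 ⟨c1,c2,c3,c4,c5,c6⟩ h'' h3, hK2 ⟨c1,c2,c3,c4,c5,c6⟩ h'' h3,
      hK2 ⟨c1,c2,c3,c4,c5,c6⟩ h'' h3]
  rcases le_or_gt t (l1 + l2 + τ) with h4 | h4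
  · rw [hJ3 ⟨c1,c2,c3,c4,c5,c6⟩ h3 h4,
      hJ3 (t := 2*l1 + 2*l2 + τ - t) ⟨c1,c2,c3,c4,c5,c6⟩ (by linarith) (by linarith)]
    exact congrArg toCirc (by ring)
  · rw [hK3 ⟨c1,c2,c3,c4,c5,c6⟩ h4 h1, hK3 ⟨c1,c2,c3,c4,c5,c6⟩ h4 h1,
      hK3 ⟨c1,c2,c3,c4,c5,c6⟩ h4 h1]

lemma hG6 {l1 l2 τ : ℝ} (hc : Ctx l1 l2 τ) (x : AddCircle (1:ℝ)) :
    (FF l1 l2 τ)^[6] x = x := by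
  have h := h6 hc (rep_mem x).1 (rep_mem x).2
  rwa [toCirc_rep x] at h

lemma twoPoint {g : AddCircle (1:ℝ) → AddCircle (1:ℝ)} {c a b : ℝ} (hab : a < b)
    (hflip : ∀ t, a < t → t < b → g (toCirc t) = toCirc (c - t))
    (hbd : ∀ t, a < t → t < b → 0 ≤ t ∧ t < 1 ∧ 0 ≤ c - t ∧ c - t < 1) :
    ∃ t, a < t ∧ t < b ∧ g (toCirc t) ≠ toCirc t := by
  by_contra hcon
  push_neg at hcon
  have m1a : a < a + (b - a)/4 := by linarith
  have m1b : a + (b - a)/4 < b := by linarith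
  have m2a : a < a + (b - a)/2 := by linarith
  have m2b : a + (b - a)/2 < b := by linarith
  obtain ⟨p1, p2, p3, p4⟩ := hbd _ m1a m1b
  obtain ⟨q1, q2, q3, q4⟩ := hbd _ m2a m2b
  have e1 : toCirc (c - (a + (b - a)/4)) = toCirc (a + (b - a)/4) :=
    (hflip _ m1a m1b).symm.trans (hcon _ m1a m1b)
  have e2 : toCirc (c - (a + (b - a)/2)) = toCirc (a + (b - a)/2) :=
    (hflip _ m2a m2b).symm.trans (hcon _ m2a m2b)
  have f1 := toCirc_inj p3 p4 p1 p2 e1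
  have f2 := toCirc_inj q3 q4 q1 q2 e2
  linarith

lemma subArc {l1 l2 τ : ℝ} (hc : Ctx l1 l2 τ) (a b : ℝ) (hab : a < b) (hba : b ≤ a + 1) :
    ∃ a' b' : ℝ, a' < b' ∧ (∀ t, a' < t → t < b' → toCirc t ∈ toCirc '' Ioo a b) ∧
      ((0 ≤ a' ∧ b' ≤ τ) ∨ (τ ≤ a' ∧ b' ≤ l1) ∨ (l1 ≤ a' ∧ b' ≤ l1 + τ) ∨
        (l1 + τ ≤ a' ∧ b' ≤ l1 + l2) ∨ (l1 + l2 ≤ a' ∧ b' ≤ l1 + l2 + τ) ∨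
        (l1 + l2 + τ ≤ a' ∧ b' ≤ 1)) := by
  obtain ⟨c1, c2, c3, c4, c5, c6⟩ := id hc
  set n : ℤ := ⌊a⌋ with hn
  have hfr0 : 0 ≤ a - n := by
    have := Int.floor_le a; linarith
  have hfr1 : a - n < 1 := by
    have := Int.lt_floor_add_one a; linarith
  set a0 : ℝ := a - n with ha0
  set b0 : ℝ := min (b - n) 1 with hb0
  have hab0 : a0 < b0 := lt_min (by simp [ha0]; linarith) hfr1
  have hmem : ∀ t, a0 < t → t < b0 → toCirc t ∈ toCirc '' Ioo a b := by
    intro t h h'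
    have h'' : t < b - n := lt_of_lt_of_le h' (min_le_left _ _)
    refine ⟨t + n, ⟨by simp [ha0] at h; linarith, by linarith⟩, toCirc_add_int t n⟩
  have hb01 : b0 ≤ 1 := min_le_right _ _
  rcases lt_or_ge a0 τ with p1 | p1
  · exact ⟨a0, min b0 τ, lt_min hab0 p1,
      fun t h h' => hmem t h (lt_of_lt_of_le h' (min_le_left _ _)),
      Or.inl ⟨hfr0, min_le_right _ _⟩⟩
  rcases lt_or_ge a0 l1 with p2 | p2
  · exact ⟨a0, min b0 l1, lt_min hab0 p2,
      fun t h h' => hmem t h (lt_of_lt_of_le h' (min_le_left _ _)),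
      Or.inr (Or.inl ⟨p1, min_le_right _ _⟩)⟩
  rcases lt_or_ge a0 (l1 + τ) with p3 | p3
  · exact ⟨a0, min b0 (l1 + τ), lt_min hab0 p3,
      fun t h h' => hmem t h (lt_of_lt_of_le h' (min_le_left _ _)),
      Or.inr (Or.inr (Or.inl ⟨p2, min_le_right _ _⟩))⟩
  rcases lt_or_ge a0 (l1 + l2) with p4 | p4
  · exact ⟨a0, min b0 (l1 + l2), lt_min hab0 p4,
      fun t h h' => hmem t h (lt_of_lt_of_le h' (min_le_left _ _)),
      Or.inr (Or.inr (Or.inr (Or.inl ⟨p3, min_le_right _ _⟩)))⟩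
  rcases lt_or_ge a0 (l1 + l2 + τ) with p5 | p5
  · exact ⟨a0, min b0 (l1 + l2 + τ), lt_min hab0 p5,
      fun t h h' => hmem t h (lt_of_lt_of_le h' (min_le_left _ _)),
      Or.inr (Or.inr (Or.inr (Or.inr (Or.inl ⟨p4, min_le_right _ _⟩))))⟩
  · exact ⟨a0, b0, hab0, hmem,
      Or.inr (Or.inr (Or.inr (Or.inr (Or.inr ⟨p5, hb01⟩))))⟩

/-- For `0 < τ < min lj`, `F = F_τ^{l1,l2,l3}` has three `2`-periodic intervals
`K1, K2, K3`, cyclically permutes the three remaining intervals (giving a `6`-periodic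
orbit of intervals on which `F³` is nowhere the identity), and its set of interval
periods is exactly `{2, 6}`. -/
theorem statement8 (l1 l2 l3 τ : ℝ)
    (h1 : 0 < l1) (h2 : 0 < l2) (h3 : 0 < l3) (hsum : l1 + l2 + l3 = 1)
    (hτ0 : 0 < τ) (hτ : τ < min l1 (min l2 l3)) :
    -- F² = id on K1 = (τ, l1), K2 = (l1+τ, l1+l2), K3 = (l1+l2+τ, 1)
    (∀ x ∈ Ioo τ l1 ∪ Ioo (l1 + τ) (l1 + l2) ∪ Ioo (l1 + l2 + τ) 1,
        FF l1 l2 τ (FF l1 l2 τ (toCirc x)) = toCirc x) ∧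
    -- the three remaining intervals are cyclically permuted
    FF l1 l2 τ '' (toCirc '' Ioo 0 τ) = toCirc '' Ioo l1 (l1 + τ) ∧
    FF l1 l2 τ '' (toCirc '' Ioo l1 (l1 + τ)) = toCirc '' Ioo (l1 + l2) (l1 + l2 + τ) ∧
    FF l1 l2 τ '' (toCirc '' Ioo (l1 + l2) (l1 + l2 + τ)) = toCirc '' Ioo 0 τ ∧
    -- F⁶ is the identity on each of these three intervals
    (∀ x ∈ Ioo (0:ℝ) τ ∪ Ioo l1 (l1 + τ) ∪ Ioo (l1 + l2) (l1 + l2 + τ),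
        (FF l1 l2 τ)^[6] (toCirc x) = toCirc x) ∧
    -- but F³ is not the identity on any nonempty open subinterval of them
    (∀ a b : ℝ, a < b →
      (Ioo a b ⊆ Ioo (0:ℝ) τ ∨ Ioo a b ⊆ Ioo l1 (l1 + τ) ∨
        Ioo a b ⊆ Ioo (l1 + l2) (l1 + l2 + τ)) →
      ∃ x ∈ Ioo a b, (FF l1 l2 τ)^[3] (toCirc x) ≠ toCirc x) ∧
    -- consequently the set of interval periods is {2, 6}
    {k : ℕ | IsIntervalPeriod (FF l1 l2 τ) k} = {2, 6} := by
  have hτ1 : τ < l1 := lt_of_lt_of_le hτ (min_le_left _ _)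
  have hτ2 : τ < l2 := lt_of_lt_of_le hτ (le_trans (min_le_right _ _) (min_le_left _ _))
  have hτ3 : τ < l3 := lt_of_lt_of_le hτ (le_trans (min_le_right _ _) (min_le_right _ _))
  have hc : Ctx l1 l2 τ := ⟨h1, h2, hτ0, hτ1, hτ2, by linarith⟩
  refine ⟨?_, ?_, ?_, ?_, ?_, ?_, ?_⟩
  · rintro x ((hx | hx) | hx)
    · exact hK1 hc hx.1 hx.2
    · exact hK2 hc hx.1 hx.2
    · exact hK3 hc hx.1 hx.2
  · ext y
    constructor
    · rintro ⟨x, ⟨t, ht, rfl⟩, rfl⟩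
      obtain ⟨u, v⟩ := ht
      exact ⟨l1 + τ - t, ⟨by linarith, by linarith⟩, (hA hc u.le (by linarith)).symm⟩
    · rintro ⟨s, hs, rfl⟩
      obtain ⟨u, v⟩ := hs
      refine ⟨toCirc (l1 + τ - s), ⟨l1 + τ - s, ⟨by linarith, by linarith⟩, rfl⟩, ?_⟩
      rw [hA (t := l1 + τ - s) hc (by linarith) (by linarith)]
      exact congrArg toCirc (by ring)
  · ext y
    constructor
    · rintro ⟨x, ⟨t, ht, rfl⟩, rfl⟩
      obtain ⟨u, v⟩ := ht
      exact ⟨2*l1 + l2 + τ - t, ⟨by linarith, by linarith⟩,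
        (hB hc u.le (by linarith)).symm⟩
    · rintro ⟨s, hs, rfl⟩
      obtain ⟨u, v⟩ := hs
      refine ⟨toCirc (2*l1 + l2 + τ - s), ⟨2*l1 + l2 + τ - s, ⟨by linarith, by linarith⟩, rfl⟩, ?_⟩
      rw [hB (t := 2*l1 + l2 + τ - s) hc (by linarith) (by linarith)]
      exact congrArg toCirc (by ring)
  · ext y
    constructor
    · rintro ⟨x, ⟨t, ht, rfl⟩, rfl⟩
      obtain ⟨u, v⟩ := ht
      exact ⟨l1 + l2 + τ - t, ⟨by linarith, by linarith⟩,
        (hC1 hc u.le v.le).symm⟩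
    · rintro ⟨s, hs, rfl⟩
      obtain ⟨u, v⟩ := hs
      refine ⟨toCirc (l1 + l2 + τ - s), ⟨l1 + l2 + τ - s, ⟨by linarith, by linarith⟩, rfl⟩, ?_⟩
      rw [hC1 (t := l1 + l2 + τ - s) hc (by linarith) (by linarith)]
      exact congrArg toCirc (by ring)
  · rintro x ((hx | hx) | hx)
    · exact h6 hc hx.1.le (by linarith [hx.2])
    · exact h6 hc (by linarith [hx.1]) (by linarith [hx.2])
    · exact h6 hc (by linarith [hx.1]) (by linarith [hx.2])
  · intro a b hab hsub
    rcases hsub with h | h | h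
    · obtain ⟨t, ht1, ht2, hne⟩ := twoPoint (g := (FF l1 l2 τ)^[3]) (c := τ) hab
        (fun t p q => by
          obtain ⟨r1, r2⟩ := h ⟨p, q⟩
          rw [iter3]; exact hJ1 hc r1.le r2.le)
        (fun t p q => by
          obtain ⟨r1, r2⟩ := h ⟨p, q⟩
          exact ⟨r1.le, by linarith, by linarith, by linarith⟩)
      exact ⟨t, ⟨ht1, ht2⟩, hne⟩
    · obtain ⟨t, ht1, ht2, hne⟩ := twoPoint (g := (FF l1 l2 τ)^[3]) (c := 2*l1 + τ) hab
        (fun t p q => by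
          obtain ⟨r1, r2⟩ := h ⟨p, q⟩
          rw [iter3]; exact hJ2 hc r1.le r2.le)
        (fun t p q => by
          obtain ⟨r1, r2⟩ := h ⟨p, q⟩
          exact ⟨by linarith, by linarith, by linarith, by linarith⟩)
      exact ⟨t, ⟨ht1, ht2⟩, hne⟩
    · obtain ⟨t, ht1, ht2, hne⟩ := twoPoint (g := (FF l1 l2 τ)^[3]) (c := 2*l1 + 2*l2 + τ) hab
        (fun t p q => by
          obtain ⟨r1, r2⟩ := h ⟨p, q⟩
          rw [iter3]; exact hJ3 hc r1.le r2.le)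
        (fun t p q => by
          obtain ⟨r1, r2⟩ := h ⟨p, q⟩
          exact ⟨by linarith, by linarith, by linarith, by linarith⟩)
      exact ⟨t, ⟨ht1, ht2⟩, hne⟩
  · ext k
    simp only [mem_setOf_eq, mem_insert_iff, mem_singleton_iff]
    constructor
    · rintro ⟨hk0, I, ⟨a, b, hab, hba, rfl⟩, hfix, hmin⟩
      have h6fix : ∀ x ∈ toCirc '' Ioo a b, (FF l1 l2 τ)^[6] x = x := fun x _ => hG6 hc x
      have hk6 : k ≤ 6 := by
        by_contra hgt
        exact hmin 6 (by norm_num) (by omega) h6fix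
      have hne1 : ¬ ∀ x ∈ toCirc '' Ioo a b, (FF l1 l2 τ)^[1] x = x := by
        intro hall
        obtain ⟨a', b', hab', hmem, hP⟩ := subArc hc a b hab hba
        have key : ∀ c : ℝ, (∀ t, a' < t → t < b' → FF l1 l2 τ (toCirc t) = toCirc (c - t)) →
            (∀ t, a' < t → t < b' → 0 ≤ t ∧ t < 1 ∧ 0 ≤ c - t ∧ c - t < 1) → False := by
          intro c hflip hbd
          obtain ⟨t, ht1, ht2, hne⟩ := twoPoint hab' hflip hbd
          refine hne ?_
          rw [← Function.iterate_one (FF l1 l2 τ)]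
          exact hall _ (hmem t ht1 ht2)
        rcases hP with ⟨p, q⟩ | ⟨p, q⟩ | ⟨p, q⟩ | ⟨p, q⟩ | ⟨p, q⟩ | ⟨p, q⟩
        · exact key (l1 + τ) (fun t u v => hA hc (by linarith) (by linarith))
            (fun t u v => ⟨by linarith, by linarith, by linarith, by linarith⟩)
        · exact key (l1 + τ) (fun t u v => hA hc (by linarith) (by linarith))
            (fun t u v => ⟨by linarith, by linarith, by linarith, by linarith⟩)
        · exact key (2*l1 + l2 + τ) (fun t u v => hB hc (by linarith) (by linarith))
            (fun t u v => ⟨by linarith, by linarith, by linarith, by linarith⟩)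
        · exact key (2*l1 + l2 + τ) (fun t u v => hB hc (by linarith) (by linarith))
            (fun t u v => ⟨by linarith, by linarith, by linarith, by linarith⟩)
        · exact key (l1 + l2 + τ) (fun t u v => hC1 hc (by linarith) (by linarith))
            (fun t u v => ⟨by linarith, by linarith, by linarith, by linarith⟩)
        · exact key (l1 + l2 + 1 + τ) (fun t u v => hC2 hc (by linarith) (by linarith))
            (fun t u v => ⟨by linarith, by linarith, by linarith, by linarith⟩)
      have hne3 : ¬ ∀ x ∈ toCirc '' Ioo a b, (FF l1 l2 τ)^[3] x = x := by
        intro hall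
        obtain ⟨a', b', hab', hmem, hP⟩ := subArc hc a b hab hba
        have key : ∀ c : ℝ,
            (∀ t, a' < t → t < b' → (FF l1 l2 τ)^[3] (toCirc t) = toCirc (c - t)) →
            (∀ t, a' < t → t < b' → 0 ≤ t ∧ t < 1 ∧ 0 ≤ c - t ∧ c - t < 1) → False := by
          intro c hflip hbd
          obtain ⟨t, ht1, ht2, hne⟩ := twoPoint hab' hflip hbd
          exact hne (hall _ (hmem t ht1 ht2))
        rcases hP with ⟨p, q⟩ | ⟨p, q⟩ | ⟨p, q⟩ | ⟨p, q⟩ | ⟨p, q⟩ | ⟨p, q⟩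
        · exact key τ (fun t u v => by rw [iter3]; exact hJ1 hc (by linarith) (by linarith))
            (fun t u v => ⟨by linarith, by linarith, by linarith, by linarith⟩)
        · exact key (l1 + τ) (fun t u v => by
              rw [iter3, hK1 hc (by linarith) (by linarith)]
              exact hA hc (by linarith) (by linarith))
            (fun t u v => ⟨by linarith, by linarith, by linarith, by linarith⟩)
        · exact key (2*l1 + τ) (fun t u v => by rw [iter3]; exact hJ2 hc (by linarith) (by linarith))
            (fun t u v => ⟨by linarith, by linarith, by linarith, by linarith⟩)
        · exact key (2*l1 + l2 + τ) (fun t u v => by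
              rw [iter3, hK2 hc (by linarith) (by linarith)]
              exact hB hc (by linarith) (by linarith))
            (fun t u v => ⟨by linarith, by linarith, by linarith, by linarith⟩)
        · exact key (2*l1 + 2*l2 + τ)
            (fun t u v => by rw [iter3]; exact hJ3 hc (by linarith) (by linarith))
            (fun t u v => ⟨by linarith, by linarith, by linarith, by linarith⟩)
        · exact key (l1 + l2 + 1 + τ) (fun t u v => by
              rw [iter3, hK3 hc (by linarith) (by linarith)]
              exact hC2 hc (by linarith) (by linarith))
            (fun t u v => ⟨by linarith, by linarith, by linarith, by linarith⟩)
      have hk1 : 1 ≤ k := hk0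
      interval_cases k
      · exact absurd hfix hne1
      · left; rfl
      · exact absurd hfix hne3
      · exfalso
        refine hmin 2 (by norm_num) (by norm_num) ?_
        intro x hx
        calc (FF l1 l2 τ)^[2] x = (FF l1 l2 τ)^[2] ((FF l1 l2 τ)^[4] x) := by rw [hfix x hx]
          _ = (FF l1 l2 τ)^[6] x := by rw [← Function.iterate_add_apply]
          _ = x := hG6 hc x
      · exfalso
        refine hmin 1 (by norm_num) (by norm_num) ?_
        intro x hx
        calc (FF l1 l2 τ)^[1] x = (FF l1 l2 τ)^[1] ((FF l1 l2 τ)^[5] x) := by rw [hfix x hx]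
          _ = (FF l1 l2 τ)^[6] x := by rw [← Function.iterate_add_apply]
          _ = x := hG6 hc x
      · right; rfl
    · rintro (rfl | rfl)
      · refine ⟨by norm_num, toCirc '' Ioo τ l1, ⟨τ, l1, hτ1, by linarith, rfl⟩, ?_, ?_⟩
        · rintro x ⟨t, ht, rfl⟩
          rw [iter2]
          exact hK1 hc ht.1 ht.2
        · intro j hj0 hj2 hall
          have hj1 : j = 1 := by omega
          subst hj1
          obtain ⟨t, ht1, ht2, hne⟩ := twoPoint (g := FF l1 l2 τ) (c := l1 + τ) hτ1
            (fun t u v => hA hc (by linarith) v)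
            (fun t u v => ⟨by linarith, by linarith, by linarith, by linarith⟩)
          refine hne ?_
          rw [← Function.iterate_one (FF l1 l2 τ)]
          exact hall _ ⟨t, ⟨ht1, ht2⟩, rfl⟩
      · refine ⟨by norm_num, toCirc '' Ioo 0 τ, ⟨0, τ, hτ0, by linarith, rfl⟩, ?_, ?_⟩
        · rintro x ⟨t, ht, rfl⟩
          exact h6 hc ht.1.le (by linarith [ht.2])
        · intro j hj0 hj6 hall
          have hq := hall (toCirc (τ/4)) ⟨τ/4, ⟨by linarith, by linarith⟩, rfl⟩
          have hj1 : 1 ≤ j := hj0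
          have hj5 : j ≤ 5 := by omega
          interval_cases j
          · rw [Function.iterate_one, hA (t := τ/4) hc (by linarith) (by linarith)] at hq
            have := toCirc_inj (by linarith) (by linarith) (by linarith) (by linarith) hq
            linarith
          · rw [iter2, hA (t := τ/4) hc (by linarith) (by linarith),
              hB (t := l1 + τ - τ/4) hc (by linarith) (by linarith)] at hq
            have := toCirc_inj (by linarith) (by linarith) (by linarith) (by linarith) hq
            linarith
          · rw [iter3, hJ1 (t := τ/4) hc (by linarith) (by linarith)] at hq
            have := toCirc_inj (by linarith) (by linarith) (by linarith) (by linarith) hq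
            linarith
          · rw [iter4, hJ1 (t := τ/4) hc (by linarith) (by linarith),
              hA (t := τ - τ/4) hc (by linarith) (by linarith)] at hq
            have := toCirc_inj (by linarith) (by linarith) (by linarith) (by linarith) hq
            linarith
          · rw [iter5, hJ1 (t := τ/4) hc (by linarith) (by linarith),
              hA (t := τ - τ/4) hc (by linarith) (by linarith),
              hB (t := l1 + τ - (τ - τ/4)) hc (by linarith) (by linarith)] at hq
            have := toCirc_inj (by linarith) (by linarith) (by linarith) (by linarith) hq
            linarith



end
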